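/- For every p > 1 and every ψ ∈ ℝ, one has 1 + cos²ψ · F_p(ψ) > 0, where F_p(ψ) = ((8p−4) cos²ψ + (5p−7) sin²ψ)/(4 cos²ψ + (p−1) sin²ψ). -/

import Mathlib

open Real

noncomputable def Fp (p ψ : ℝ) : ℝ :=
  ((8 * p - 4) * cos ψ ^ 2 + (5 * p - 7) * sin ψ ^ 2) /
    (4 * cos ψ ^ 2 + (p - 1) * sin ψ ^ 2)

theorem stmt_3 (p : ℝ) (hp : 1 < p) (ψ : ℝ) :
    0 < 1 + cos ψ ^ 2 * Fp p ψ := by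
  have hs : sin ψ ^ 2 + cos ψ ^ 2 = 1 := sin_sq_add_cos_sq ψ
  have hc : 0 ≤ cos ψ ^ 2 := sq_nonneg _
  have hs' : 0 ≤ sin ψ ^ 2 := sq_nonneg _
  have hD : 0 < 4 * cos ψ ^ 2 + (p - 1) * sin ψ ^ 2 := by nlinarith [mul_nonneg (le_of_lt (sub_pos.2 hp)) hs']
  rw [Fp, show (1 : ℝ) + cos ψ ^ 2 * (((8 * p - 4) * cos ψ ^ 2 + (5 * p - 7) * sin ψ ^ 2) /
      (4 * cos ψ ^ 2 + (p - 1) * sin ψ ^ 2)) =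
      ((4 * cos ψ ^ 2 + (p - 1) * sin ψ ^ 2) + cos ψ ^ 2 * ((8 * p - 4) * cos ψ ^ 2 + (5 * p - 7) * sin ψ ^ 2)) /
      (4 * cos ψ ^ 2 + (p - 1) * sin ψ ^ 2) by rw [mul_div_assoc', one_add_div hD.ne']]
  apply div_pos _ hD
  nlinarith [mul_nonneg (sub_pos.2 hp).le hc, mul_nonneg (sub_pos.2 hp).le (mul_nonneg hc hc), mul_nonneg hc hc, mul_nonneg hc hs']
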